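/- Let A ∈ M_n(F[t]) be a nonzero hermitian or skew-hermitian matrix and let d be the monic gcd of all entries of A. Then d is homogeneous: either d* = d (d is even, i.e., d ∈ F[t²]) or d* = −d (d is odd, i.e., d ∈ tF[t²]). -/

import Mathlib

open Polynomial

/-- The involution of `F[t]` fixing `F` and sending `t ↦ -t`. -/
noncomputable def pstar {F : Type*} [Field F] (p : F[X]) : F[X] := p.comp (-X)

/-- The induced involution on matrices: transpose composed with entrywise `pstar`. -/
noncomputable def mstar {F : Type*} [Field F] {n : ℕ}
    (A : Matrix (Fin n) (Fin n) F[X]) : Matrix (Fin n) (Fin n) F[X] :=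
  Matrix.of fun i j => pstar (A j i)

/-- `A` and `B` are congruent if `B = S* A S` for some `S ∈ GL_n(F[t])`. -/
def PolyMatCongruent {F : Type*} [Field F] {n : ℕ}
    (A B : Matrix (Fin n) (Fin n) F[X]) : Prop :=
  ∃ S : Matrix (Fin n) (Fin n) F[X], IsUnit S.det ∧ B = mstar S * A * S

lemma pstar_dvd {F : Type*} [Field F] {a b : F[X]} (h : a ∣ b) : pstar a ∣ pstar b := by
  obtain ⟨c, rfl⟩ := h
  exact ⟨pstar c, by simp [pstar, mul_comp]⟩

lemma pstar_pstar {F : Type*} [Field F] (p : F[X]) : pstar (pstar p) = p := by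
  simp [pstar, comp_assoc]

/-- The monic gcd of the entries of a nonzero hermitian or skew-hermitian
matrix over `F[t]` is homogeneous: it is either even or odd. -/
theorem gcd_of_hermitian_is_homogeneous {F : Type*} [Field F] [IsAlgClosed F]
    (h2 : (2 : F) ≠ 0) (n : ℕ) (A : Matrix (Fin n) (Fin n) F[X])
    (hA : mstar A = A ∨ mstar A = -A) (hA0 : A ≠ 0)
    (d : F[X]) (hmonic : d.Monic)
    (hdvd : ∀ i j, d ∣ A i j)
    (hgreatest : ∀ e : F[X], (∀ i j, e ∣ A i j) → e ∣ d) :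
    pstar d = d ∨ pstar d = -d := by
  have h1 : ∀ i j, pstar d ∣ A i j := by
    intro i j
    have hd := pstar_dvd (hdvd j i)
    rcases hA with h | h
    · have he : pstar (A j i) = A i j := by
        have := congrFun (congrFun h i) j
        simpa [mstar] using this
      rwa [he] at hd
    · have he : pstar (A j i) = -A i j := by
        have := congrFun (congrFun h i) j
        simpa [mstar] using this
      rw [he] at hd
      exact (dvd_neg).mp hd
  have hsd : pstar d ∣ d := hgreatest _ h1
  have hds : d ∣ pstar d := by
    have := pstar_dvd hsd
    rwa [pstar_pstar] at this
  obtain ⟨u, hu⟩ := associated_of_dvd_dvd hds hsd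
  obtain ⟨a, ha, hCa⟩ := Polynomial.isUnit_iff.mp u.isUnit
  -- hu : d * ↑u = pstar d
  have hu' : pstar d = d * C a := by rw [hCa, hu]
  have hlc1 : (pstar d).leadingCoeff = a := by
    rw [hu', leadingCoeff_mul, hmonic.leadingCoeff, one_mul, leadingCoeff_C]
  have hlc2 : (pstar d).leadingCoeff = (-1 : F) ^ d.natDegree := by
    have hq : (-X : F[X]).natDegree ≠ 0 := by simp
    rw [pstar, leadingCoeff_comp hq, hmonic.leadingCoeff, one_mul]
    simp
  have ha' : a = (-1 : F) ^ d.natDegree := by rw [← hlc1, hlc2]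
  rcases Nat.even_or_odd d.natDegree with he | ho
  · left
    rw [hu', ha', he.neg_one_pow]
    simp
  · right
    rw [hu', ha', ho.neg_one_pow]
    simp [mul_comm]
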